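/- Let (r*, α*) be an optimal solution to the convex program CP(G): minimize Σ_{u∈V} r_u² subject to r_u = Σ_{(u,v)∈E} α_{u,v} for all u, α_{u,v} + α_{v,u} ≥ 1 and α_{u,v}, α_{v,u} ≥ 0 for all edges (u,v). Then for every edge (x,y) ∈ E with r*_x > r*_y, we have α*_{x,y} = 0. -/
import Mathlib


open Finset

variable {V : Type*} [Fintype V] [DecidableEq V]

/-- Number of edges of `G` with both endpoints in `S`. -/
def edgeCount (G : SimpleGraph V) [DecidableRel G.Adj] (S : Finset V) : ℕ :=
  (G.edgeFinset.filter fun e => ∀ v ∈ e, v ∈ S).card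

/-- Edge density |E(S)|/|S| of the induced subgraph G[S]. -/
noncomputable def density (G : SimpleGraph V) [DecidableRel G.Adj] (S : Finset V) : ℝ :=
  (edgeCount G S : ℝ) / (S.card : ℝ)

/-- `G[S]` is ρ-compact: connected, and removing any nonempty `U ⊆ S`
removes at least `ρ * |U|` edges. -/
def IsCompactSub (G : SimpleGraph V) [DecidableRel G.Adj] (ρ : ℝ) (S : Finset V) : Prop :=
  0 ≤ ρ ∧ (G.induce (S : Set V)).Connected ∧
  ∀ U ⊆ S, U.Nonempty →
    ρ * (U.card : ℝ) ≤ (edgeCount G S : ℝ) - (edgeCount G (S \ U) : ℝ)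

/-- `G[S]` is a locally densest subgraph: a maximal `density G S`-compact subgraph. -/
def IsLDS (G : SimpleGraph V) [DecidableRel G.Adj] (S : Finset V) : Prop :=
  IsCompactSub G (density G S) S ∧
  ∀ S' : Finset V, S ⊂ S' → ¬ IsCompactSub G (density G S) S'

/-- The compact number of `u`: the largest ρ such that `u`
lies in a ρ-compact subgraph of `G`. -/
noncomputable def compactNum (G : SimpleGraph V) [DecidableRel G.Adj] (u : V) : ℝ :=
  sSup {ρ : ℝ | ∃ S : Finset V, u ∈ S ∧ IsCompactSub G ρ S}

/-- Feasibility for the convex program CP(G). -/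
def CPFeasible (G : SimpleGraph V) [DecidableRel G.Adj] (r : V → ℝ) (α : V → V → ℝ) : Prop :=
  (∀ u, r u = ∑ v ∈ G.neighborFinset u, α u v) ∧
  (∀ u v, G.Adj u v → 1 ≤ α u v + α v u) ∧
  (∀ u v, G.Adj u v → 0 ≤ α u v)

/-- Optimality for CP(G): feasible and minimizes `∑ u, (r u)^2`. -/
def CPOptimal (G : SimpleGraph V) [DecidableRel G.Adj] (r : V → ℝ) (α : V → V → ℝ) : Prop :=
  CPFeasible G r α ∧
  ∀ r' α', CPFeasible G r' α' → ∑ u, (r u) ^ 2 ≤ ∑ u, (r' u) ^ 2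

/-- in an optimal CP solution, an edge assigns no weight to
its endpoint with the larger r-value. -/
theorem cp_optimal_alpha_zero (G : SimpleGraph V) [DecidableRel G.Adj]
    (r : V → ℝ) (α : V → V → ℝ) (hopt : CPOptimal G r α) :
    ∀ x y : V, G.Adj x y → r x > r y → α x y = 0 := by
  intro x y hxy hr
  obtain ⟨⟨hfr, hf1, hf0⟩, hmin⟩ := hopt
  by_contra hne
  have hxy0 : 0 < α x y := lt_of_le_of_ne (hf0 x y hxy) (Ne.symm hne)
  have hxny : x ≠ y := hxy.ne
  set ε := min (α x y) ((r x - r y) / 2) with hεdef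
  have hεpos : 0 < ε := lt_min hxy0 (by linarith)
  have hεa : ε ≤ α x y := min_le_left _ _
  have hεd : ε ≤ (r x - r y) / 2 := min_le_right _ _
  set c : V → V → ℝ := fun u v => if u = x ∧ v = y then -ε else if u = y ∧ v = x then ε else 0
    with hc
  set α' : V → V → ℝ := fun u v => α u v + c u v with hα'
  set r' : V → ℝ := fun u => ∑ v ∈ G.neighborFinset u, α' u v with hr'
  have hcsum : ∀ u v, c u v + c v u = 0 := by
    intro u v
    simp only [hc]
    by_cases hA : u = x ∧ v = y
    · obtain ⟨rfl, rfl⟩ := hA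
      rw [if_pos ⟨rfl, rfl⟩, if_neg (fun h => hxny h.1.symm), if_pos ⟨rfl, rfl⟩]
      ring
    · by_cases hB : u = y ∧ v = x
      · obtain ⟨rfl, rfl⟩ := hB
        rw [if_neg (fun h => hxny h.1.symm), if_pos ⟨rfl, rfl⟩, if_pos ⟨rfl, rfl⟩]
        ring
      · rw [if_neg hA, if_neg hB, if_neg (fun h => hB ⟨h.2, h.1⟩),
          if_neg (fun h => hA ⟨h.2, h.1⟩)]
        ring
  have hfeas : CPFeasible G r' α' := by
    refine ⟨fun u => rfl, ?_, ?_⟩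
    · intro u v huv
      have h1 := hf1 u v huv
      have h2 := hcsum u v
      simp only [hα']
      linarith
    · intro u v huv
      simp only [hα', hc]
      split_ifs with h1 h2
      · obtain ⟨rfl, rfl⟩ := h1; linarith
      · have := hf0 u v huv; linarith
      · have := hf0 u v huv; linarith
  have hsplit : ∀ u, r' u = r u + ∑ v ∈ G.neighborFinset u, c u v := by
    intro u
    simp only [hr', hα', Finset.sum_add_distrib, hfr u]
  have hcx : ∀ v, c x v = if v = y then -ε else 0 := by
    intro v
    simp only [hc]
    by_cases h : v = y
    · rw [if_pos ⟨trivial, h⟩, if_pos h]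
    · rw [if_neg (fun hh => h hh.2), if_neg (fun hh => hxny hh.1), if_neg h]
  have hcy : ∀ v, c y v = if v = x then ε else 0 := by
    intro v
    simp only [hc]
    by_cases h : v = x
    · rw [if_neg (fun hh => hxny hh.1.symm), if_pos ⟨trivial, h⟩, if_pos h]
    · rw [if_neg (fun hh => hxny hh.1.symm), if_neg (fun hh => h hh.2), if_neg h]
  have hrx : r' x = r x - ε := by
    rw [hsplit x]
    rw [Finset.sum_congr rfl (fun v _ => hcx v), Finset.sum_ite_eq' (G.neighborFinset x) y]
    simp [hxy]
    ring
  have hry : r' y = r y + ε := by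
    rw [hsplit y]
    rw [Finset.sum_congr rfl (fun v _ => hcy v), Finset.sum_ite_eq' (G.neighborFinset y) x]
    simp [hxy.symm]
  have hrother : ∀ u, u ≠ x → u ≠ y → r' u = r u := by
    intro u hux huy
    rw [hsplit u]
    have : ∀ v ∈ G.neighborFinset u, c u v = 0 := by
      intro v _
      simp only [hc]
      rw [if_neg (fun hh => hux hh.1), if_neg (fun hh => huy hh.1)]
    rw [Finset.sum_congr rfl this]
    simp
  have hsum : ∀ f : V → ℝ, ∑ u, f u = ∑ u ∈ univ \ {x, y}, f u + (f x + f y) := by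
    intro f
    rw [← Finset.sum_sdiff (Finset.subset_univ ({x, y} : Finset V)),
      Finset.sum_pair hxny]
  have hle := hmin r' α' hfeas
  rw [hsum (fun u => r u ^ 2), hsum (fun u => r' u ^ 2)] at hle
  have heq : ∑ u ∈ univ \ {x, y}, r' u ^ 2 = ∑ u ∈ univ \ {x, y}, r u ^ 2 := by
    refine Finset.sum_congr rfl (fun u hu => ?_)
    simp only [Finset.mem_sdiff, Finset.mem_insert, Finset.mem_singleton] at hu
    rw [hrother u (fun h => hu.2 (Or.inl h)) (fun h => hu.2 (Or.inr h))]
  rw [heq, hrx, hry] at hle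
  nlinarith [hεpos, hεd]
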